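/- arXiv:2010.13448 — 2 statements merged into one kernel-verified Lean document; each statement's English description precedes it below -/
import Mathlib

section
/- Let x(t) = Σ_{k=1}^K A_k(t) e^{2πiφ_k(t)} with each A_k ∈ L^∞, A_k > 0, satisfying |A_k(t+τ) - A_k(t)| ≤ ε₁|τ|A_k(t) for all t, τ, and each φ_k ∈ C² with |φ''_k(t)| ≤ ε₂ for all t. Let g ∈ L¹(ℝ) with I₁ = ∫|t g(t)|dt and I₂ = ∫|t² g(t)|dt finite, σ > 0, a > 0, μ ∈ ℝ. Then the remainder rem₀ = ∫ [x(b+at) - Σ_k A_k(b) e^{2πi(φ_k(b)+φ'_k(b)at)}] (1/σ) g(t/σ) e^{-2πiμt} dt satisfies |rem₀| ≤ M(b) a σ (ε₁ I₁ + π ε₂ I₂ a σ), where M(b) = Σ_k A_k(b). -/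
open MeasureTheory intervalIntegral

lemma lip_cexp : LipschitzWith 1 (fun t : ℝ => Complex.exp (t * Complex.I)) := by
  have hder : ∀ t : ℝ, HasDerivAt (fun s : ℝ => Complex.exp (s * Complex.I))
      (Complex.exp (t * Complex.I) * Complex.I) t := by
    intro t
    have h1 : HasDerivAt (fun s : ℝ => (s : ℂ) * Complex.I) Complex.I t := by
      simpa using (Complex.ofRealCLM.hasDerivAt (x := t)).mul_const Complex.I
    simpa using h1.cexp
  apply lipschitzWith_of_nnnorm_deriv_le (fun t => (hder t).differentiableAt)
  intro t
  rw [(hder t).deriv]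
  simp [← NNReal.coe_le_coe, Complex.norm_exp]

lemma cexp_sub_le (x y : ℝ) :
    ‖Complex.exp (x * Complex.I) - Complex.exp (y * Complex.I)‖ ≤ |x - y| := by
  have := lip_cexp.dist_le_mul x y
  simpa [dist_eq_norm, Real.dist_eq] using this

lemma taylor2 (f : ℝ → ℝ) (hf : ContDiff ℝ 2 f) {ε : ℝ}
    (hε : ∀ t, |deriv (deriv f) t| ≤ ε) (x h : ℝ) :
    |f (x + h) - f x - deriv f x * h| ≤ ε * h ^ 2 / 2 := by
  have hε0 : 0 ≤ ε := le_trans (abs_nonneg _) (hε 0)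
  have hd1 : Differentiable ℝ f := hf.differentiable (by norm_num)
  have hf' : ContDiff ℝ 1 (deriv f) := (contDiff_succ_iff_deriv.mp hf).2.2
  have hd2 : Differentiable ℝ (deriv f) := hf'.differentiable one_ne_zero
  have hlip : LipschitzWith ε.toNNReal (deriv f) := by
    apply lipschitzWith_of_nnnorm_deriv_le hd2
    intro t
    rw [← NNReal.coe_le_coe]
    simpa [Real.coe_toNNReal _ hε0] using hε t
  have hlip' : ∀ s, |deriv f s - deriv f x| ≤ ε * |s - x| := by
    intro s
    have := hlip.dist_le_mul s x
    simpa [Real.dist_eq, Real.coe_toNNReal _ hε0] using this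
  have hcont : Continuous (deriv f) := hd2.continuous
  have hftc : ∫ s in x..(x + h), deriv f s = f (x + h) - f x :=
    intervalIntegral.integral_deriv_eq_sub (fun s _ => hd1 s)
      (hcont.intervalIntegrable _ _)
  have heq : f (x + h) - f x - deriv f x * h
      = ∫ s in x..(x + h), (deriv f s - deriv f x) := by
    rw [intervalIntegral.integral_sub (hcont.intervalIntegrable _ _)
      (intervalIntegrable_const), hftc, intervalIntegral.integral_const]
    simp [smul_eq_mul]
    ring
  rw [heq, ← Real.norm_eq_abs]
  have hb : ‖∫ s in x..(x + h), (deriv f s - deriv f x)‖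
      ≤ |∫ s in x..(x + h), ε * abs (s - x)| := by
    apply intervalIntegral.norm_integral_le_abs_of_norm_le
    · exact Filter.Eventually.of_forall (fun t => by
        simpa [Real.norm_eq_abs] using hlip' t)
    · exact ((continuous_const.mul ((continuous_id.sub continuous_const).abs)).intervalIntegrable _ _)
  refine hb.trans ?_
  have hcalc : ∫ s in x..(x + h), ε * abs (s - x) = ε * ∫ u in (0:ℝ)..h, |u| := by
    rw [intervalIntegral.integral_const_mul]
    congr 1
    have := intervalIntegral.integral_comp_sub_right (a := x) (b := x + h) (fun u => |u|) x
    simpa using this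
  rw [hcalc, abs_mul, abs_of_nonneg hε0]
  have habs : abs (∫ u in (0:ℝ)..h, |u|) = h ^ 2 / 2 := by
    rcases le_or_gt 0 h with hh | hh
    · rw [intervalIntegral.integral_congr (g := fun u => u) ?_, integral_id]
      · rw [abs_of_nonneg (by nlinarith [sq_nonneg h])]; ring
      · intro u hu
        rw [Set.uIcc_of_le hh] at hu
        exact abs_of_nonneg hu.1
    · rw [intervalIntegral.integral_congr (g := fun u => -u) ?_]
      · rw [intervalIntegral.integral_neg, integral_id, abs_neg,
          abs_of_nonneg (by nlinarith [sq_nonneg h])]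
        ring
      · intro u hu
        rw [Set.uIcc_of_ge hh.le] at hu
        exact abs_of_nonpos hu.2
  rw [habs]; ring_nf; rfl

lemma cexp_two_pi (r : ℝ) : Complex.exp (2 * Real.pi * Complex.I * (r : ℂ))
    = Complex.exp (((2 * Real.pi * r : ℝ) : ℂ) * Complex.I) := by
  congr 1; push_cast; ring

lemma exp_diff_le (r s : ℝ) :
    ‖Complex.exp (2 * Real.pi * Complex.I * (r : ℂ))
      - Complex.exp (2 * Real.pi * Complex.I * (s : ℂ))‖ ≤ 2 * Real.pi * |r - s| := by
  rw [cexp_two_pi, cexp_two_pi]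
  refine (cexp_sub_le (2 * Real.pi * r) (2 * Real.pi * s)).trans ?_
  rw [← mul_sub, abs_mul, abs_of_nonneg (by positivity : (0:ℝ) ≤ 2 * Real.pi)]

theorem rem0_bound_sinusoidal_model (K : ℕ) (A : Fin K → ℝ → ℝ) (φ : Fin K → ℝ → ℝ)
    (g : ℝ → ℝ) (ε₁ ε₂ σ a b μ : ℝ) (hσ : 0 < σ) (ha : 0 < a)
    (hAbd : ∀ k, MeasureTheory.MemLp (A k) ⊤)
    (hApos : ∀ k t, 0 < A k t)
    (hAlip : ∀ k t τ, |A k (t + τ) - A k t| ≤ ε₁ * |τ| * A k t)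
    (hφ : ∀ k, ContDiff ℝ 2 (φ k))
    (hφ'' : ∀ k t, |deriv (deriv (φ k)) t| ≤ ε₂)
    (hg : Integrable g)
    (hg1 : Integrable (fun t => t * g t))
    (hg2 : Integrable (fun t => t ^ 2 * g t)) :
    ‖(∫ t : ℝ,
        ((∑ k, (A k (b + a * t) : ℂ) * Complex.exp (2 * Real.pi * Complex.I * (φ k (b + a * t) : ℝ)))
          - ∑ k, (A k b : ℂ) * Complex.exp (2 * Real.pi * Complex.I *
              ((φ k b : ℝ) + deriv (φ k) b * (a * t))))
        * ((1 / σ : ℝ) : ℂ) * (g (t / σ) : ℂ) * Complex.exp (-(2 * Real.pi * Complex.I * (μ * t))))‖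
      ≤ (∑ k, A k b) * (a * σ) *
          (ε₁ * (∫ t : ℝ, |t * g t|) + Real.pi * ε₂ * (∫ t : ℝ, |t ^ 2 * g t|) * (a * σ)) := by
  set C : ℝ := ∑ k, A k b with hC
  set I₁ : ℝ := ∫ t : ℝ, |t * g t| with hI₁
  set I₂ : ℝ := ∫ t : ℝ, |t ^ 2 * g t| with hI₂
  set F : ℝ → ℝ := fun u =>
    C * (ε₁ * a * |u * g u| + Real.pi * ε₂ * a ^ 2 * σ * |u ^ 2 * g u|) with hF
  have hFint : Integrable F := by
    exact (((hg1.abs.const_mul (ε₁ * a)).add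
      (hg2.abs.const_mul (Real.pi * ε₂ * a ^ 2 * σ))).const_mul C)
  have hDint : Integrable (fun t => F (t / σ)) := hFint.comp_div (ne_of_gt hσ)
  -- pointwise bound
  have hpt : ∀ t : ℝ,
      ‖((∑ k, (A k (b + a * t) : ℂ) * Complex.exp (2 * Real.pi * Complex.I * (φ k (b + a * t) : ℝ)))
          - ∑ k, (A k b : ℂ) * Complex.exp (2 * Real.pi * Complex.I *
              ((φ k b : ℝ) + deriv (φ k) b * (a * t))))
        * ((1 / σ : ℝ) : ℂ) * (g (t / σ) : ℂ)
        * Complex.exp (-(2 * Real.pi * Complex.I * (μ * t)))‖ ≤ F (t / σ) := by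
    intro t
    have hkey : ∀ k : Fin K,
        ‖(A k (b + a * t) : ℂ) * Complex.exp (2 * Real.pi * Complex.I * (φ k (b + a * t) : ℝ))
          - (A k b : ℂ) * Complex.exp (2 * Real.pi * Complex.I *
              ((φ k b : ℝ) + deriv (φ k) b * (a * t)))‖
          ≤ A k b * (ε₁ * a * |t| + Real.pi * ε₂ * a ^ 2 * t ^ 2) := by
      intro k
      have harg : (2 * Real.pi * Complex.I * ((φ k b : ℝ) + deriv (φ k) b * (a * t) : ℂ))
          = 2 * Real.pi * Complex.I * ((φ k b + deriv (φ k) b * (a * t) : ℝ) : ℂ) := by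
        push_cast; ring
      rw [harg]
      set r1 : ℝ := φ k (b + a * t)
      set r2 : ℝ := φ k b + deriv (φ k) b * (a * t)
      have hsplit : (A k (b + a * t) : ℂ) * Complex.exp (2 * Real.pi * Complex.I * (r1 : ℂ))
          - (A k b : ℂ) * Complex.exp (2 * Real.pi * Complex.I * (r2 : ℂ))
          = ((A k (b + a * t) - A k b : ℝ) : ℂ) * Complex.exp (2 * Real.pi * Complex.I * (r1 : ℂ))
            + (A k b : ℂ) * (Complex.exp (2 * Real.pi * Complex.I * (r1 : ℂ))
              - Complex.exp (2 * Real.pi * Complex.I * (r2 : ℂ))) := by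
        push_cast; ring
      rw [hsplit]
      refine (norm_add_le _ _).trans ?_
      rw [norm_mul, norm_mul]
      have hexp1 : ‖Complex.exp (2 * Real.pi * Complex.I * (r1 : ℂ))‖ = 1 := by
        rw [cexp_two_pi, Complex.norm_exp_ofReal_mul_I]
      have hA1 : ‖((A k (b + a * t) - A k b : ℝ) : ℂ)‖ ≤ ε₁ * a * |t| * A k b := by
        rw [Complex.norm_real, Real.norm_eq_abs]
        have := hAlip k b (a * t)
        calc |A k (b + a * t) - A k b| ≤ ε₁ * |a * t| * A k b := this
          _ = ε₁ * a * |t| * A k b := by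
            rw [abs_mul, abs_of_pos ha]; ring
      have hA2 : ‖(A k b : ℂ)‖ = A k b := by
        rw [Complex.norm_real, Real.norm_eq_abs, abs_of_pos (hApos k b)]
      have hE : ‖Complex.exp (2 * Real.pi * Complex.I * (r1 : ℂ))
          - Complex.exp (2 * Real.pi * Complex.I * (r2 : ℂ))‖
          ≤ Real.pi * ε₂ * a ^ 2 * t ^ 2 := by
        refine (exp_diff_le r1 r2).trans ?_
        have ht := taylor2 (φ k) (hφ k) (hφ'' k) b (a * t)
        have : |r1 - r2| ≤ ε₂ * (a * t) ^ 2 / 2 := by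
          simpa [r1, r2, sub_sub] using ht
        calc 2 * Real.pi * |r1 - r2| ≤ 2 * Real.pi * (ε₂ * (a * t) ^ 2 / 2) := by
              exact mul_le_mul_of_nonneg_left this (by positivity)
          _ = Real.pi * ε₂ * a ^ 2 * t ^ 2 := by ring
      calc ‖((A k (b + a * t) - A k b : ℝ) : ℂ)‖ * ‖Complex.exp (2 * Real.pi * Complex.I * (r1 : ℂ))‖
            + ‖(A k b : ℂ)‖ * ‖Complex.exp (2 * Real.pi * Complex.I * (r1 : ℂ))
              - Complex.exp (2 * Real.pi * Complex.I * (r2 : ℂ))‖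
          ≤ (ε₁ * a * |t| * A k b) * 1 + A k b * (Real.pi * ε₂ * a ^ 2 * t ^ 2) := by
            rw [hexp1, hA2]
            exact add_le_add (by simpa using hA1) (mul_le_mul_of_nonneg_left hE (hApos k b).le)
        _ = A k b * (ε₁ * a * |t| + Real.pi * ε₂ * a ^ 2 * t ^ 2) := by ring
    have hsum : ‖(∑ k, (A k (b + a * t) : ℂ) * Complex.exp (2 * Real.pi * Complex.I * (φ k (b + a * t) : ℝ)))
          - ∑ k, (A k b : ℂ) * Complex.exp (2 * Real.pi * Complex.I *
              ((φ k b : ℝ) + deriv (φ k) b * (a * t)))‖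
        ≤ C * (ε₁ * a * |t| + Real.pi * ε₂ * a ^ 2 * t ^ 2) := by
      rw [← Finset.sum_sub_distrib]
      refine (norm_sum_le _ _).trans ?_
      rw [hC, Finset.sum_mul]
      exact Finset.sum_le_sum (fun k _ => hkey k)
    rw [norm_mul, norm_mul, norm_mul]
    have he3 : ‖Complex.exp (-(2 * Real.pi * Complex.I * ((μ : ℂ) * (t : ℂ))))‖ = 1 := by
      rw [Complex.norm_exp]
      simp
    have he1 : ‖((1 / σ : ℝ) : ℂ)‖ = 1 / σ := by
      rw [Complex.norm_real, Real.norm_eq_abs, abs_of_pos (by positivity)]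
    have he2 : ‖((g (t / σ) : ℝ) : ℂ)‖ = |g (t / σ)| := by
      rw [Complex.norm_real, Real.norm_eq_abs]
    rw [he1, he2, he3, mul_one]
    have hFeq : F (t / σ) = C * (ε₁ * a * |t| + Real.pi * ε₂ * a ^ 2 * t ^ 2)
        * ((1 / σ) * |g (t / σ)|) := by
      rw [hF]
      simp only [abs_mul, abs_pow, abs_div, abs_of_pos hσ, sq_abs, div_pow]
      field_simp
    rw [hFeq]
    have step := mul_le_mul_of_nonneg_right
      (mul_le_mul_of_nonneg_right hsum (by positivity : (0:ℝ) ≤ 1 / σ))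
      (abs_nonneg (g (t / σ)))
    refine step.trans (le_of_eq ?_)
    ring
  refine (norm_integral_le_of_norm_le hDint (Filter.Eventually.of_forall hpt)).trans ?_
  have hval : ∫ t : ℝ, F (t / σ) = σ * (C * (ε₁ * a * I₁ + Real.pi * ε₂ * a ^ 2 * σ * I₂)) := by
    rw [Measure.integral_comp_div F σ, abs_of_pos hσ, smul_eq_mul]
    congr 1
    rw [hF]
    rw [MeasureTheory.integral_const_mul]
    rw [MeasureTheory.integral_add (hg1.abs.const_mul (ε₁ * a))
      (hg2.abs.const_mul (Real.pi * ε₂ * a ^ 2 * σ)),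
      MeasureTheory.integral_const_mul, MeasureTheory.integral_const_mul]
  rw [hval]
  ring_nf
  rfl
end

section
/- Let x(t) = Σ_{k=1}^K A_k(t) e^{2πiφ_k(t)} with each A_k ∈ L^∞, A_k > 0, satisfying |A_k(t+τ) - A_k(t)| ≤ ε₁|τ|A_k(t), and each φ_k ∈ C³ with |φ'''_k(t)| ≤ ε₃ for all t. Let g ∈ L¹(ℝ) with I₁ = ∫|t g(t)|dt and I₃ = ∫|t³ g(t)|dt finite, σ > 0, a > 0. Then the remainder res₀ = ∫ [x(b+at) - Σ_k A_k(b) e^{2πi(φ_k(b)+φ'_k(b)at + (1/2)φ''_k(b)a²t²)}] (1/σ) g(t/σ) e^{-2πiμt} dt satisfies |res₀| ≤ M(b)(ε₁ I₁ a σ + (π/3) ε₃ I₃ a³ σ³), where M(b) = Σ_k A_k(b). -/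
open MeasureTheory intervalIntegral

lemma taylor3_bound {h : ℝ → ℝ} (hh : ContDiff ℝ 3 h) {ε : ℝ}
    (hb3 : ∀ t, |deriv (deriv (deriv h)) t| ≤ ε) (b d : ℝ) :
    |h (b + d) - (h b + deriv h b * d + (1/2) * deriv (deriv h) b * d^2)|
      ≤ ε * |d|^3 / 6 := by
  have hε : 0 ≤ ε := le_trans (abs_nonneg _) (hb3 0)
  set h1 := deriv h with hh1
  set h2 := deriv h1 with hh2
  set h3 := deriv h2 with hh3
  have hc1 : ContDiff ℝ 2 h1 := (contDiff_succ_iff_deriv.mp hh).2.2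
  have hc2 : ContDiff ℝ 1 h2 := (contDiff_succ_iff_deriv.mp hc1).2.2
  have hd0 : Differentiable ℝ h := hh.differentiable (by norm_num)
  have hd1 : Differentiable ℝ h1 := hc1.differentiable (by norm_num)
  have hd2 : Differentiable ℝ h2 := hc2.differentiable (by norm_num)
  have hc3 : Continuous h3 := ((contDiff_succ_iff_deriv.mp hc2).2.2 :
      ContDiff ℝ 0 h3).continuous
  -- Step A
  have stepA : ∀ t : ℝ, |h2 t - h2 b| ≤ ε * |t - b| := by
    intro t
    have heq : h2 t - h2 b = ∫ s in b..t, h3 s := by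
      rw [hh3, integral_deriv_eq_sub (fun x _ => (hd2 x)) ((hc3.intervalIntegrable _ _))]
    rw [heq]
    have := intervalIntegral.norm_integral_le_of_norm_le_const
      (f := h3) (a := b) (b := t) (C := ε) (fun x _ => by simpa using hb3 x)
    simpa [Real.norm_eq_abs, abs_sub_comm t b] using this
  -- Step B
  have stepB : ∀ t : ℝ, |h1 t - h1 b - h2 b * (t - b)| ≤ ε * (t - b)^2 / 2 := by
    intro t
    have hder : ∀ s : ℝ, HasDerivAt (fun u => h1 u - h2 b * u) (h2 s - h2 b) s := by
      intro s
      have := ((hd1 s).hasDerivAt.sub (((hasDerivAt_id s).const_mul (h2 b))))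
      rw [mul_one] at this
      exact this
    have heq : h1 t - h1 b - h2 b * (t - b) = ∫ s in b..t, (h2 s - h2 b) := by
      have hd : deriv (fun u => h1 u - h2 b * u) = fun s => h2 s - h2 b :=
        funext fun s => (hder s).deriv
      have := integral_deriv_eq_sub (f := fun u => h1 u - h2 b * u) (a := b) (b := t)
        (fun x _ => (hder x).differentiableAt)
        (by rw [hd]
            exact ((hc2.continuous.sub continuous_const).intervalIntegrable _ _))
      rw [hd] at this
      rw [this]; ring
    rw [heq]
    rcases le_total b t with hbt | htb
    · have hb : ‖∫ s in b..t, (h2 s - h2 b)‖ ≤ |∫ s in b..t, ε * (s - b)| := by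
        apply intervalIntegral.norm_integral_le_abs_of_norm_le
        · filter_upwards [ae_restrict_mem measurableSet_uIoc] with s hs
          have hs' : b ≤ s := by
            rcases Set.mem_uIoc.mp hs with ⟨hl, hr⟩ | ⟨hl, hr⟩ <;> linarith
          have habs : |s - b| = s - b := abs_of_nonneg (by linarith)
          have := stepA s
          rw [habs] at this
          rw [Real.norm_eq_abs]
          exact this
        · exact ((continuous_const.mul (continuous_id.sub continuous_const)).intervalIntegrable _ _)
      have hcomp : (∫ s in b..t, ε * (s - b)) = ε * (t - b)^2 / 2 := by
        rw [intervalIntegral.integral_const_mul]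
        have : (∫ s in b..t, (s - b)) = ∫ s in (b - b)..(t - b), s :=
          intervalIntegral.integral_comp_sub_right (fun x => x) b
        rw [this, integral_id]; ring
      rw [hcomp] at hb
      calc |∫ s in b..t, (h2 s - h2 b)| ≤ |ε * (t - b)^2/2| := hb
        _ = ε * (t-b)^2/2 := abs_of_nonneg (by positivity)
    · have hb : ‖∫ s in b..t, (h2 s - h2 b)‖ ≤ |∫ s in b..t, ε * (b - s)| := by
        apply intervalIntegral.norm_integral_le_abs_of_norm_le
        · filter_upwards [ae_restrict_mem measurableSet_uIoc] with s hs
          have hs' : s ≤ b := by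
            rcases Set.mem_uIoc.mp hs with ⟨hl, hr⟩ | ⟨hl, hr⟩ <;> linarith
          have habs : |s - b| = b - s := by
            rw [abs_sub_comm]; exact abs_of_nonneg (by linarith)
          have := stepA s
          rw [habs] at this
          rw [Real.norm_eq_abs]
          exact this
        · exact ((continuous_const.mul (continuous_const.sub continuous_id)).intervalIntegrable _ _)
      have hcomp : (∫ s in b..t, ε * (b - s)) = -(ε * (t - b)^2 / 2) := by
        rw [intervalIntegral.integral_const_mul]
        have h2' : (∫ s in b..t, (b - s)) = (∫ s in b..t, (b:ℝ)) - ∫ s in b..t, s :=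
          intervalIntegral.integral_sub intervalIntegrable_const intervalIntegrable_id
        rw [h2', integral_id, intervalIntegral.integral_const]
        simp only [smul_eq_mul]
        ring
      rw [hcomp] at hb
      calc |∫ s in b..t, (h2 s - h2 b)| ≤ |-(ε * (t - b)^2/2)| := hb
        _ = ε * (t-b)^2/2 := by rw [abs_neg]; exact abs_of_nonneg (by positivity)
  -- Step C
  have hderC : ∀ s : ℝ, HasDerivAt
      (fun u => h u - (h b + h1 b * u + (1/2) * h2 b * (u - b)^2))
      (h1 s - (h1 b + h2 b * (s - b))) s := by
    intro s
    have d1 : HasDerivAt h (h1 s) s := (hd0 s).hasDerivAt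
    have d2 : HasDerivAt (fun u : ℝ => h b + h1 b * u + (1/2) * h2 b * (u - b)^2)
        (h1 b + h2 b * (s - b)) s := by
      have e1 : HasDerivAt (fun u : ℝ => h1 b * u) (h1 b) s := by
        simpa using (hasDerivAt_id s).const_mul (h1 b)
      have e2 : HasDerivAt (fun u : ℝ => (u - b)^2) (2 * (s - b)) s := by
        have := ((hasDerivAt_id s).sub_const b).pow 2
        exact this.congr_deriv (by norm_num)
      have e3 : HasDerivAt (fun u : ℝ => (1/2) * h2 b * (u - b)^2)
          ((1/2) * h2 b * (2 * (s - b))) s := e2.const_mul _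
      have := ((hasDerivAt_const s (h b)).add e1).add e3
      exact this.congr_deriv (by ring)
    exact d1.sub d2
  have heqC : h (b + d) - (h b + h1 b * d + (1/2) * h2 b * d^2)
      = ∫ s in b..(b + d), (h1 s - (h1 b + h2 b * (s - b))) := by
    have hderiv : deriv (fun u => h u - (h b + h1 b * u + (1/2) * h2 b * (u - b)^2))
        = fun s => h1 s - (h1 b + h2 b * (s - b)) := funext fun s => (hderC s).deriv
    have := integral_deriv_eq_sub
      (f := fun u => h u - (h b + h1 b * u + (1/2) * h2 b * (u - b)^2)) (a := b) (b := b + d)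
      (fun x _ => (hderC x).differentiableAt)
      (by rw [hderiv]
          exact ((hc1.continuous.sub (continuous_const.add
            (continuous_const.mul (continuous_id.sub continuous_const)))).intervalIntegrable _ _))
    rw [hderiv] at this
    rw [this]; ring
  have hbound : ‖∫ s in b..(b+d), (h1 s - (h1 b + h2 b * (s - b)))‖
      ≤ |∫ s in b..(b+d), ε * (s - b)^2 / 2| := by
    apply intervalIntegral.norm_integral_le_abs_of_norm_le
    · filter_upwards with s
      have := stepB s
      rw [Real.norm_eq_abs]
      calc |h1 s - (h1 b + h2 b * (s - b))| = |h1 s - h1 b - h2 b * (s - b)| := by ring_nf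
        _ ≤ ε * (s - b)^2 / 2 := this
    · exact (((continuous_const.mul ((continuous_id.sub continuous_const).pow 2)).div_const 2
        ).intervalIntegrable _ _)
  have hcompC : (∫ s in b..(b+d), ε * (s - b)^2 / 2) = ε * d^3 / 6 := by
    have e0 : (fun s : ℝ => ε * (s - b)^2 / 2) = fun s => (ε/2) * (s - b)^2 := by
      funext s; ring
    rw [e0, intervalIntegral.integral_const_mul]
    have : (∫ s in b..(b+d), (s - b)^2) = ∫ s in (b-b)..(b+d-b), s^2 :=
      intervalIntegral.integral_comp_sub_right (fun x => x^2) b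
    rw [this]
    simp only [sub_self, add_sub_cancel_left]
    rw [integral_pow]
    push_cast
    ring
  rw [heqC]
  rw [Real.norm_eq_abs] at hbound
  refine le_trans hbound (le_of_eq ?_)
  rw [hcompC, abs_div, abs_mul, abs_of_nonneg hε, abs_pow]
  norm_num
lemma exp_lip (θ η : ℝ) :
    ‖Complex.exp (2 * Real.pi * Complex.I * θ) - Complex.exp (2 * Real.pi * Complex.I * η)‖
      ≤ 2 * Real.pi * |θ - η| := by
  set c : ℂ := 2 * Real.pi * Complex.I with hc
  have hder : ∀ x : ℝ, HasDerivAt (fun x : ℝ => Complex.exp (c * x)) (Complex.exp (c * x) * c) x := by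
    intro x
    have h1 : HasDerivAt (fun x : ℝ => (x : ℂ)) 1 x := by
      simpa using (hasDerivAt_id x).ofReal_comp
    simpa using (h1.const_mul c).cexp
  have hbnd : ∀ x : ℝ, ‖Complex.exp (c * x) * c‖ ≤ 2 * Real.pi := by
    intro x
    rw [norm_mul]
    have h1 : ‖Complex.exp (c * (x:ℂ))‖ = 1 := by
      rw [Complex.norm_exp, hc]
      norm_num
    have h2 : ‖c‖ = 2 * Real.pi := by
      rw [hc, norm_mul, norm_mul, Complex.norm_I, mul_one, Complex.norm_real,
        Real.norm_eq_abs, abs_of_nonneg Real.pi_nonneg]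
      norm_num
    rw [h1, h2, one_mul]
  have := Convex.norm_image_sub_le_of_norm_hasDerivWithin_le
    (f := fun x : ℝ => Complex.exp (c * x)) (f' := fun x : ℝ => Complex.exp (c * x) * c)
    (s := Set.univ) (C := 2 * Real.pi)
    (fun x _ => (hder x).hasDerivWithinAt) (fun x _ => hbnd x) convex_univ
    (Set.mem_univ η) (Set.mem_univ θ)
  calc ‖Complex.exp (2 * Real.pi * Complex.I * θ) - Complex.exp (2 * Real.pi * Complex.I * η)‖
      = ‖Complex.exp (c * θ) - Complex.exp (c * η)‖ := by rw [hc]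
    _ ≤ 2 * Real.pi * ‖θ - η‖ := this
    _ = 2 * Real.pi * |θ - η| := by rw [Real.norm_eq_abs]

theorem res0_bound_chirp_model (K : ℕ) (A : Fin K → ℝ → ℝ) (φ : Fin K → ℝ → ℝ)
    (g : ℝ → ℝ) (ε₁ ε₃ σ a b μ : ℝ) (hσ : 0 < σ) (ha : 0 < a)
    (hAbd : ∀ k, MeasureTheory.MemLp (A k) ⊤)
    (hApos : ∀ k t, 0 < A k t)
    (hAlip : ∀ k t τ, |A k (t + τ) - A k t| ≤ ε₁ * |τ| * A k t)
    (hφ : ∀ k, ContDiff ℝ 3 (φ k))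
    (hφ''' : ∀ k t, |deriv (deriv (deriv (φ k))) t| ≤ ε₃)
    (hg : Integrable g)
    (hg1 : Integrable (fun t => t * g t))
    (hg3 : Integrable (fun t => t ^ 3 * g t)) :
    ‖(∫ t : ℝ,
        ((∑ k, (A k (b + a * t) : ℂ) * Complex.exp (2 * Real.pi * Complex.I * (φ k (b + a * t) : ℝ)))
          - ∑ k, (A k b : ℂ) * Complex.exp (2 * Real.pi * Complex.I *
              ((φ k b : ℝ) + deriv (φ k) b * (a * t)
                + (1 / 2) * deriv (deriv (φ k)) b * (a * t) ^ 2)))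
        * ((1 / σ : ℝ) : ℂ) * (g (t / σ) : ℂ) * Complex.exp (-(2 * Real.pi * Complex.I * (μ * t))))‖
      ≤ (∑ k, A k b) *
          (ε₁ * (∫ t : ℝ, |t * g t|) * (a * σ)
            + (Real.pi / 3) * ε₃ * (∫ t : ℝ, |t ^ 3 * g t|) * (a * σ) ^ 3) := by
  by_cases hK : K = 0
  · subst hK
    simp
  have k0 : Fin K := ⟨0, Nat.pos_of_ne_zero hK⟩
  have hε₁ : 0 ≤ ε₁ := by
    have h := hAlip k0 b 1
    simp only [abs_one, mul_one] at h
    nlinarith [hApos k0 b, abs_nonneg (A k0 (b + 1) - A k0 b)]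
  have hε₃ : 0 ≤ ε₃ := le_trans (abs_nonneg _) (hφ''' k0 0)
  set M : ℝ := ∑ k, A k b with hM
  have hM0 : 0 ≤ M := Finset.sum_nonneg fun k _ => (hApos k b).le
  set I₁ : ℝ := ∫ t : ℝ, |t * g t| with hI₁
  set I₃ : ℝ := ∫ t : ℝ, |t ^ 3 * g t| with hI₃
  set Q : Fin K → ℝ → ℝ := fun k t => (φ k b) + deriv (φ k) b * (a * t)
      + (1 / 2) * deriv (deriv (φ k)) b * (a * t) ^ 2 with hQ
  have hexp : ∀ (k : Fin K) (t : ℝ),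
      Complex.exp (2 * Real.pi * Complex.I * ((φ k b : ℂ) + ((deriv (φ k) b : ℝ) : ℂ) * ((a:ℂ) * (t:ℂ))
        + 1 / 2 * ((deriv (deriv (φ k)) b : ℝ) : ℂ) * ((a:ℂ) * (t:ℂ)) ^ 2))
      = Complex.exp (2 * Real.pi * Complex.I * (Q k t : ℝ)) := by
    intro k t
    congr 1
    rw [hQ]
    push_cast
    ring
  simp only [hexp]
  set f : ℝ → ℂ := fun t =>
      ((∑ k, (A k (b + a * t) : ℂ) * Complex.exp (2 * Real.pi * Complex.I * (φ k (b + a * t) : ℝ)))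
          - ∑ k, (A k b : ℂ) * Complex.exp (2 * Real.pi * Complex.I * (Q k t : ℝ)))
        * ((1 / σ : ℝ) : ℂ) * (g (t / σ) : ℂ) * Complex.exp (-(2 * Real.pi * Complex.I * (μ * t)))
      with hf
  set w : ℝ → ℝ := fun t => ε₁ * a * |t| + (Real.pi / 3) * ε₃ * a ^ 3 * |t| ^ 3 with hw
  set G : ℝ → ℝ := fun t => M * w t * ((1 / σ) * |g (t / σ)|) with hG
  -- per-component bound
  have key : ∀ (k : Fin K) (t : ℝ),
      ‖(A k (b + a * t) : ℂ) * Complex.exp (2 * Real.pi * Complex.I * (φ k (b + a * t) : ℝ))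
        - (A k b : ℂ) * Complex.exp (2 * Real.pi * Complex.I * (Q k t : ℝ))‖
      ≤ A k b * w t := by
    intro k t
    have hA := hAlip k b (a * t)
    have hT := taylor3_bound (hφ k) (fun s => hφ''' k s) b (a * t)
    have hE : ‖Complex.exp (2 * Real.pi * Complex.I * (φ k (b + a * t) : ℝ))
        - Complex.exp (2 * Real.pi * Complex.I * (Q k t : ℝ))‖
        ≤ 2 * Real.pi * (ε₃ * |a * t| ^ 3 / 6) := by
      refine le_trans (exp_lip _ _) ?_
      exact mul_le_mul_of_nonneg_left hT (by positivity)
    set e1 := Complex.exp (2 * Real.pi * Complex.I * (φ k (b + a * t) : ℝ))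
    set e2 := Complex.exp (2 * Real.pi * Complex.I * (Q k t : ℝ))
    have he1 : ‖e1‖ = 1 := by
      rw [Complex.norm_exp]; norm_num
    have hsplit : (A k (b + a * t) : ℂ) * e1 - (A k b : ℂ) * e2
        = ((A k (b + a * t) - A k b : ℝ) : ℂ) * e1 + (A k b : ℂ) * (e1 - e2) := by
      push_cast; ring
    rw [hsplit]
    refine le_trans (norm_add_le _ _) ?_
    rw [norm_mul, norm_mul, he1, mul_one, Complex.norm_real, Complex.norm_real,
      Real.norm_eq_abs, Real.norm_eq_abs, abs_of_pos (hApos k b)]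
    calc |A k (b + a * t) - A k b| + A k b * ‖e1 - e2‖
        ≤ ε₁ * |a * t| * A k b + A k b * (2 * Real.pi * (ε₃ * |a * t| ^ 3 / 6)) :=
          add_le_add hA (mul_le_mul_of_nonneg_left hE (hApos k b).le)
      _ = A k b * w t := by
          rw [hw, abs_mul, abs_of_pos ha]; ring
  -- pointwise bound on the integrand
  have hpt : ∀ t : ℝ, ‖f t‖ ≤ G t := by
    intro t
    have hsum : ‖(∑ k, (A k (b + a * t) : ℂ) *
          Complex.exp (2 * Real.pi * Complex.I * (φ k (b + a * t) : ℝ)))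
          - ∑ k, (A k b : ℂ) * Complex.exp (2 * Real.pi * Complex.I * (Q k t : ℝ))‖
        ≤ M * w t := by
      rw [← Finset.sum_sub_distrib]
      refine le_trans (norm_sum_le _ _) ?_
      rw [hM, Finset.sum_mul]
      exact Finset.sum_le_sum fun k _ => key k t
    have he : ‖Complex.exp (-(2 * Real.pi * Complex.I * (μ * t)))‖ = 1 := by
      rw [Complex.norm_exp]; norm_num
    rw [hf]
    calc ‖(((∑ k, (A k (b + a * t) : ℂ) *
            Complex.exp (2 * Real.pi * Complex.I * (φ k (b + a * t) : ℝ)))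
            - ∑ k, (A k b : ℂ) * Complex.exp (2 * Real.pi * Complex.I * (Q k t : ℝ)))
          * ((1 / σ : ℝ) : ℂ) * (g (t / σ) : ℂ)
          * Complex.exp (-(2 * Real.pi * Complex.I * (μ * t))))‖
        = ‖(∑ k, (A k (b + a * t) : ℂ) *
            Complex.exp (2 * Real.pi * Complex.I * (φ k (b + a * t) : ℝ)))
            - ∑ k, (A k b : ℂ) * Complex.exp (2 * Real.pi * Complex.I * (Q k t : ℝ))‖
            * (1 / σ) * |g (t / σ)| * 1 := by
          rw [norm_mul, norm_mul, norm_mul, he, Complex.norm_real, Complex.norm_real,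
            Real.norm_eq_abs, Real.norm_eq_abs, abs_of_pos (by positivity : (0:ℝ) < 1 / σ)]
      _ ≤ (M * w t) * (1 / σ) * |g (t / σ)| * 1 :=
          mul_le_mul_of_nonneg_right (mul_le_mul_of_nonneg_right
            (mul_le_mul_of_nonneg_right hsum (by positivity)) (abs_nonneg _)) zero_le_one
      _ = G t := by rw [hG]; ring
  -- integrability and value of the dominating function
  have hwpos : ∀ t : ℝ, 0 ≤ w t := by
    intro t
    rw [hw]
    positivity
  have hGdecomp : G = fun t => (M * ε₁ * a) * ((fun s => |s * g s|) (t / σ))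
      + (M * ((Real.pi / 3) * ε₃) * a ^ 3 * σ ^ 2) * ((fun s => |s ^ 3 * g s|) (t / σ)) := by
    funext t
    rw [hG, hw]
    simp only
    rw [abs_mul, abs_mul, abs_pow, abs_div, abs_of_pos hσ]
    field_simp
  have hi1 : Integrable (fun t => (fun s => |s * g s|) (t / σ)) := hg1.abs.comp_div hσ.ne'
  have hi3 : Integrable (fun t => (fun s => |s ^ 3 * g s|) (t / σ)) := hg3.abs.comp_div hσ.ne'
  have hGint : Integrable G := by
    rw [hGdecomp]
    exact (hi1.const_mul _).add (hi3.const_mul _)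
  have hGval : ∫ t : ℝ, G t = M * (ε₁ * I₁ * (a * σ) + (Real.pi / 3) * ε₃ * I₃ * (a * σ) ^ 3) := by
    rw [hGdecomp]
    rw [MeasureTheory.integral_add (hi1.const_mul _) (hi3.const_mul _), MeasureTheory.integral_const_mul, MeasureTheory.integral_const_mul,
      MeasureTheory.Measure.integral_comp_div (fun s => |s * g s|) σ,
      MeasureTheory.Measure.integral_comp_div (fun s => |s ^ 3 * g s|) σ]
    rw [smul_eq_mul, smul_eq_mul, abs_of_pos hσ, ← hI₁, ← hI₃]
    ring
  -- conclusion
  calc ‖∫ t : ℝ, f t‖ = ‖∫ t : ℝ, f t‖ := rfl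
    _ ≤ ∫ t : ℝ, ‖f t‖ := norm_integral_le_integral_norm f
    _ ≤ ∫ t : ℝ, G t := by
        refine integral_mono_of_nonneg (Filter.Eventually.of_forall fun t => norm_nonneg _)
          hGint (Filter.Eventually.of_forall hpt)
    _ = M * (ε₁ * I₁ * (a * σ) + (Real.pi / 3) * ε₃ * I₃ * (a * σ) ^ 3) := hGval
end
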